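/- Let X be a separable Banach space, K = {x ∈ X : α‖x‖ ≤ x*(x)} with ‖x*‖ = x*(v) = 1, ‖v‖ = 1, α ∈ (0,1), and let f : X → ℝ be K-increasing. Define B = {x ∈ X : limsup_{t→0} |f(x+tv)−f(x)|/|t| = ∞}. Then there exists ε > 0 such that for every curve φ : ℝ → X with t ↦ φ(t)−tv having Lipschitz constant less than ε, the set {r ∈ ℝ : φ(r) ∈ B} has Lebesgue measure zero. -/

import Mathlib

open Metric MeasureTheory

theorem bad_set_null_along_curves
    {X : Type*} [NormedAddCommGroup X] [NormedSpace ℝ X] [CompleteSpace X]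
    [TopologicalSpace.SeparableSpace X]
    (v : X) (hv : ‖v‖ = 1) (x' : X →L[ℝ] ℝ) (hx' : ‖x'‖ = 1) (hxv : x' v = 1)
    (hLUR : ∀ u : ℕ → X, (∀ n, ‖u n‖ = 1) →
      Filter.Tendsto (fun n => ‖u n + v‖) Filter.atTop (nhds 2) →
      Filter.Tendsto u Filter.atTop (nhds v))
    (α : ℝ) (hα : α ∈ Set.Ioo (0:ℝ) 1)
    (f : X → ℝ) (hf : ∀ x y : X, α * ‖y - x‖ ≤ x' (y - x) → f x ≤ f y) :
    ∃ ε > (0:ℝ), ∀ φ : ℝ → X,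
      (∃ c : ℝ, c < ε ∧ ∀ s t : ℝ, ‖(φ t - t • v) - (φ s - s • v)‖ ≤ c * |t - s|) →
      volume {r : ℝ | φ r ∈ {x : X | ∀ C : ℝ, ∀ δ > (0:ℝ),
        ∃ t : ℝ, |t| < δ ∧ C * |t| < |f (x + t • v) - f x|}} = 0 := by
  obtain ⟨hα0, hα1⟩ := hα
  have hε0 : (0:ℝ) < (1 - α) / (1 + α) := div_pos (by linarith) (by linarith)
  refine ⟨(1 - α) / (1 + α), hε0, ?_⟩
  rintro φ ⟨c, hcε, hc⟩
  have hc0 : 0 ≤ c := by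
    have := hc 0 1
    simp only [sub_zero, abs_one, mul_one, zero_smul, sub_zero, one_smul] at this
    exact le_trans (norm_nonneg _) this
  have hcα : c * (1 + α) < 1 - α := (lt_div_iff₀ (by linarith : (0:ℝ) < 1 + α)).mp hcε
  -- key cone lemma
  have keyK : ∀ (z : X) (a : ℝ) (w : X), z = a • v + w → (1 + α) * ‖w‖ ≤ (1 - α) * a →
      α * ‖z‖ ≤ x' z := by
    intro z a w hz hcond
    have hw0 : (0:ℝ) ≤ ‖w‖ := norm_nonneg w
    have ha : 0 ≤ a := by nlinarith
    have h1 : ‖z‖ ≤ a + ‖w‖ := by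
      rw [hz]
      calc ‖a • v + w‖ ≤ ‖a • v‖ + ‖w‖ := norm_add_le _ _
        _ = a + ‖w‖ := by rw [norm_smul, hv, Real.norm_eq_abs, abs_of_nonneg ha, mul_one]
    have hxw : |x' w| ≤ ‖w‖ := by
      have := x'.le_opNorm w
      rwa [hx', one_mul, Real.norm_eq_abs] at this
    have h2 : a - ‖w‖ ≤ x' z := by
      simp only [hz, map_add, ContinuousLinearMap.map_smul, hxv, smul_eq_mul, mul_one]
      have := (abs_le.mp hxw).1
      linarith
    nlinarith [mul_le_mul_of_nonneg_left h1 hα0.le, norm_nonneg z]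
  -- comparison lemmas
  have cmp_up : ∀ r t s : ℝ, c * (1 + α) * |s| ≤ (1 - α) * (s - t) →
      f (φ r + t • v) ≤ f (φ (r + s)) := by
    intro r t s h
    apply hf
    apply keyK _ (s - t) ((φ (r + s) - (r + s) • v) - (φ r - r • v))
    · module
    · have hw := hc r (r + s)
      rw [add_sub_cancel_left] at hw
      have hw0 : (0:ℝ) ≤ ‖(φ (r + s) - (r + s) • v) - (φ r - r • v)‖ := norm_nonneg _
      nlinarith
  have cmp_dn : ∀ r t s : ℝ, c * (1 + α) * |s| ≤ (1 - α) * (t - s) →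
      f (φ (r + s)) ≤ f (φ r + t • v) := by
    intro r t s h
    apply hf
    apply keyK _ (t - s) (-(( φ (r + s) - (r + s) • v) - (φ r - r • v)))
    · module
    · rw [norm_neg]
      have hw := hc r (r + s)
      rw [add_sub_cancel_left] at hw
      have hw0 : (0:ℝ) ≤ ‖(φ (r + s) - (r + s) • v) - (φ r - r • v)‖ := norm_nonneg _
      nlinarith
  set g : ℝ → ℝ := fun r => f (φ r) with hg
  have mono : Monotone g := by
    intro r s hrs
    have h : f (φ r + (0:ℝ) • v) ≤ f (φ (r + (s - r))) := by
      apply cmp_up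
      rw [abs_of_nonneg (by linarith : (0:ℝ) ≤ s - r)]
      nlinarith
    simpa using h
  have hnull : volume {r : ℝ | ¬ DifferentiableAt ℝ g r} = 0 :=
    ae_iff.mp mono.ae_differentiableAt
  apply measure_mono_null _ hnull
  intro r hr
  simp only [Set.mem_setOf_eq] at hr ⊢
  intro hdiff
  -- set up constants
  set θ := c * (1 + α) / (1 - α) with hθ
  have hθ0 : 0 ≤ θ := div_nonneg (by positivity) (by linarith)
  have hθ1 : θ < 1 := (div_lt_one (by linarith)).mpr (by linarith)
  set lam := θ / (1 - θ) with hlam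
  have hlam0 : 0 ≤ lam := div_nonneg hθ0 (by linarith)
  -- differentiability bound
  have hd := hdiff.hasDerivAt
  rw [hasDerivAt_iff_isLittleO] at hd
  have hd1 := hd.def one_pos
  rw [Metric.eventually_nhds_iff] at hd1
  obtain ⟨δ, hδ0, hδ⟩ := hd1
  set L := deriv g r with hL
  have bound : ∀ s : ℝ, |s| < δ → |g (r + s) - g r| ≤ (|L| + 1) * |s| := by
    intro s hs
    have := hδ (y := r + s) (by simpa [Real.dist_eq] using hs)
    simp only [add_sub_cancel_left, one_mul, Real.norm_eq_abs, smul_eq_mul] at this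
    calc |g (r + s) - g r| = |(g (r + s) - g r - s * L) + s * L| := by ring_nf
      _ ≤ |g (r + s) - g r - s * L| + |s * L| := abs_add_le _ _
      _ ≤ |s| + |s| * |L| := by rw [abs_mul]; exact add_le_add this le_rfl
      _ = (|L| + 1) * |s| := by ring
  -- get contradiction via hr
  set M := (|L| + 1) * (1 + lam) with hM
  have hδ'0 : 0 < δ / (1 + lam) := div_pos hδ0 (by linarith)
  obtain ⟨t, ht, hMt⟩ := hr M (δ / (1 + lam)) hδ'0
  set T := |t| with hT
  -- upper comparison with s₊ = t + lam * T
  have habs : ∀ u : ℝ, |u| ≤ lam * T → |t + u| ≤ (1 + lam) * T := by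
    intro u hu
    calc |t + u| ≤ T + |u| := abs_add_le _ _
      _ ≤ (1 + lam) * T := by linarith [hu]
  have hcond : ∀ u : ℝ, |u| ≤ lam * T → c * (1 + α) * |t + u| ≤ (1 - α) * (lam * T) := by
    intro u hu
    have h1 : c * (1 + α) * |t + u| ≤ c * (1 + α) * ((1 + lam) * T) :=
      mul_le_mul_of_nonneg_left (habs u hu) (by positivity)
    have h2 : c * (1 + α) = θ * (1 - α) := by
      rw [hθ, div_mul_cancel₀ _ (by linarith : (1:ℝ) - α ≠ 0)]
    have h3 : θ * (1 + lam) = lam := by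
      have hne : (1:ℝ) - θ ≠ 0 := by linarith
      rw [hlam]; field_simp; ring
    calc c * (1 + α) * |t + u| ≤ c * (1 + α) * ((1 + lam) * T) := h1
      _ = (1 - α) * (lam * T) := by
        rw [h2]; linear_combination (1 - α) * T * h3
  have hup : f (φ r + t • v) ≤ g (r + (t + lam * T)) := by
    apply cmp_up
    have := hcond (lam * T) (by rw [abs_of_nonneg (by positivity)])
    calc c * (1 + α) * |t + lam * T| ≤ (1 - α) * (lam * T) := this
      _ = (1 - α) * (t + lam * T - t) := by ring_nf
  have hdn : g (r + (t - lam * T)) ≤ f (φ r + t • v) := by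
    apply cmp_dn
    have := hcond (-(lam * T)) (by rw [abs_neg, abs_of_nonneg (by positivity)])
    calc c * (1 + α) * |t - lam * T| = c * (1 + α) * |t + -(lam * T)| := by ring_nf
      _ ≤ (1 - α) * (lam * T) := this
      _ = (1 - α) * (t - (t - lam * T)) := by ring_nf
  -- bounds on increments
  have hsp : |t + lam * T| < δ := by
    have := habs (lam * T) (by rw [abs_of_nonneg (by positivity)])
    calc |t + lam * T| ≤ (1 + lam) * T := this
      _ < (1 + lam) * (δ / (1 + lam)) := by
          apply mul_lt_mul_of_pos_left ht (by linarith)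
      _ = δ := by field_simp
  have hsm : |t - lam * T| < δ := by
    have := habs (-(lam * T)) (by rw [abs_neg, abs_of_nonneg (by positivity)])
    calc |t - lam * T| = |t + -(lam * T)| := by ring_nf
      _ ≤ (1 + lam) * T := this
      _ < (1 + lam) * (δ / (1 + lam)) := by
          apply mul_lt_mul_of_pos_left ht (by linarith)
      _ = δ := by field_simp
  have b1 := bound _ hsp
  have b2 := bound _ hsm
  have habs1 : |t + lam * T| ≤ (1 + lam) * T :=
    habs (lam * T) (by rw [abs_of_nonneg (by positivity)])
  have habs2 : |t - lam * T| ≤ (1 + lam) * T := by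
    have := habs (-(lam * T)) (by rw [abs_neg, abs_of_nonneg (by positivity)])
    calc |t - lam * T| = |t + -(lam * T)| := by ring_nf
      _ ≤ (1 + lam) * T := this
  -- final bound
  have hfin : |f (φ r + t • v) - f (φ r)| ≤ M * T := by
    have hLpos : (0:ℝ) ≤ |L| + 1 := by positivity
    have e1 : g (r + (t + lam * T)) - g r ≤ M * T := by
      have := (abs_le.mp b1).2
      have h2 : (|L| + 1) * |t + lam * T| ≤ M * T := by
        rw [hM]
        calc (|L| + 1) * |t + lam * T| ≤ (|L| + 1) * ((1 + lam) * T) :=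
              mul_le_mul_of_nonneg_left habs1 hLpos
          _ = (|L| + 1) * (1 + lam) * T := by ring
      linarith
    have e2 : g r - g (r + (t - lam * T)) ≤ M * T := by
      have := (abs_le.mp b2).1
      have h2 : (|L| + 1) * |t - lam * T| ≤ M * T := by
        rw [hM]
        calc (|L| + 1) * |t - lam * T| ≤ (|L| + 1) * ((1 + lam) * T) :=
              mul_le_mul_of_nonneg_left habs2 hLpos
          _ = (|L| + 1) * (1 + lam) * T := by ring
      linarith
    rw [abs_le]
    constructor
    · linarith [hdn]
    · have : f (φ r) = g r := rfl
      linarith [hup]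
  exact absurd (lt_of_lt_of_le hMt hfin) (lt_irrefl _)
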